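/- Let F be a field of characteristic zero and let f : F → F be an SD map. Then f fixes the prime subfield pointwise: f(q) = q for every rational number q (viewed as an element of F via the canonical embedding of ℚ into F). -/

import Mathlib

/-- A function `f : F → F` on a field `F` is an *SD map* if for all `x ≠ y` one has
`f x ≠ f y` and `f ((x+y)/(x-y)) = (f x + f y) / (f x - f y)`. -/
def IsSDMap {F : Type*} [Field F] (f : F → F) : Prop :=
  ∀ ⦃x y : F⦄, x ≠ y →
    f x ≠ f y ∧ f ((x + y) / (x - y)) = (f x + f y) / (f x - f y)

theorem sd_map_fixes_rationals {F : Type*} [Field F] [CharZero F]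
    (f : F → F) (hf : IsSDMap f) : ∀ q : ℚ, f (q : F) = (q : F) := by
  have hinj : Function.Injective f := by
    intro x y h
    by_contra hne
    exact (hf hne).1 h
  -- f 1 = 1 and f 0 = 0
  have key : ∀ x : F, x ≠ 0 → f 1 * (f x - f 0) = f x + f 0 := by
    intro x hx
    obtain ⟨hne, heq⟩ := hf hx
    have h1 : (x + 0) / (x - 0) = 1 := by field_simp; ring
    rw [h1] at heq
    have hd : f x - f 0 ≠ 0 := sub_ne_zero.mpr hne
    rw [eq_div_iff hd] at heq
    exact heq
  have h12 : f 1 ≠ f 2 := (hf (by norm_num : (1:F) ≠ 2)).1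
  have e1 := key 1 one_ne_zero
  have e2 := key 2 two_ne_zero
  have hf1 : f 1 = 1 := by
    have hz : (f 1 - 1) * (f 1 - f 2) = 0 := by linear_combination e1 - e2
    rcases mul_eq_zero.1 hz with h | h
    · linear_combination h
    · exact absurd (sub_eq_zero.mp h) h12
  have hf0 : f 0 = 0 := by
    rw [hf1] at e1
    linear_combination (-1/2 : F) * e1
  -- odd
  have hodd : ∀ x : F, f (-x) = - f x := by
    intro x
    rcases eq_or_ne x 0 with h | h
    · simp [h, hf0]
    · have hxy : x ≠ -x := by
        intro hc
        exact h (by linear_combination (1/2 : F) * hc)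
      obtain ⟨hne, heq⟩ := hf hxy
      have harg : (x + -x) / (x - -x) = 0 := by
        rw [add_neg_cancel, zero_div]
      rw [harg, hf0] at heq
      have hd : f x - f (-x) ≠ 0 := sub_ne_zero.mpr hne
      have hnum : f x + f (-x) = 0 := by
        rcases div_eq_zero_iff.mp heq.symm with h' | h'
        · exact h'
        · exact absurd h' hd
      linear_combination hnum
  have hm1 : f (-1) = -1 := by rw [hodd 1, hf1]
  -- f of inverse
  have hinv : ∀ u : F, u ≠ 0 → f u⁻¹ = (f u)⁻¹ := by
    intro u hu
    have h2 : (2:F) ≠ 0 := two_ne_zero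
    have hsub : (u+1)/2 - (u-1)/2 = 1 := by
      rw [div_sub_div_same, show (u+1) - (u-1) = 2 by ring, div_self h2]
    have hsum : (u+1)/2 + (u-1)/2 = u := by
      rw [← add_div, show (u+1) + (u-1) = 2*u by ring,
        mul_div_cancel_left₀ u h2]
    have hxy : (u+1)/2 ≠ (u-1)/2 := by
      intro hc
      rw [hc, sub_self] at hsub
      exact one_ne_zero hsub.symm
    have hxny : (u+1)/2 ≠ -((u-1)/2) := by
      intro hc
      apply hu
      rw [← hsum, hc]
      ring
    obtain ⟨hne, heq⟩ := hf hxy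
    obtain ⟨hne2, heq2⟩ := hf hxny
    rw [hsum, hsub, div_one] at heq
    rw [← sub_eq_add_neg, sub_neg_eq_add, hsub, hsum, one_div, hodd] at heq2
    have hd1 : f ((u+1)/2) - f ((u-1)/2) ≠ 0 := sub_ne_zero.mpr hne
    have hd2 : f ((u+1)/2) + f ((u-1)/2) ≠ 0 := by
      intro hc
      apply hne2
      rw [hodd]
      linear_combination hc
    have hmul : f u⁻¹ * f u = 1 := by
      rw [heq, heq2, ← sub_eq_add_neg, sub_neg_eq_add]
      field_simp
    exact eq_inv_of_mul_eq_one_left hmul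
  -- squares
  have hsq : ∀ x : F, f (x^2) = (f x)^2 := by
    intro x
    rcases eq_or_ne x 0 with h | hx0
    · simp [h, hf0]
    rcases eq_or_ne x 1 with h | hx1
    · simp [h, hf1]
    rcases eq_or_ne x (-1) with h | hxm1
    · rw [h, hm1]; norm_num [hf1]
    have hx2 : x^2 ≠ 1 := by
      intro hc
      have : (x-1)*(x+1) = 0 := by linear_combination hc
      rcases mul_eq_zero.1 this with h | h
      · exact hx1 (by linear_combination h)
      · exact hxm1 (by linear_combination h)
    have hxi : x ≠ x⁻¹ := by
      intro hc
      apply hx2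
      calc x^2 = x * x := sq x
        _ = x⁻¹ * x := by rw [← hc]
        _ = 1 := inv_mul_cancel₀ hx0
    have hfx0 : f x ≠ 0 := fun hc => hx0 (hinj (hc.trans hf0.symm))
    have hfx1 : f x ≠ 1 := fun hc => hx1 (hinj (hc.trans hf1.symm))
    have hfxm1 : f x ≠ -1 := fun hc => hxm1 (hinj (hc.trans hm1.symm))
    have hfx2 : (f x)^2 - 1 ≠ 0 := by
      intro hc
      have : (f x - 1)*(f x + 1) = 0 := by linear_combination hc
      rcases mul_eq_zero.1 this with h | h
      · exact hfx1 (by linear_combination h)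
      · exact hfxm1 (by linear_combination h)
    obtain ⟨hne, heq⟩ := hf hxi
    have hsub2 : x^2 - 1 ≠ 0 := sub_ne_zero.mpr hx2
    have harg : (x + x⁻¹)/(x - x⁻¹) = (x^2+1)/(x^2-1) := by
      rw [div_eq_div_iff _ hsub2]
      · field_simp
      · intro hc
        apply hx2
        have hmul : (x - x⁻¹) * x = 0 := by rw [hc, zero_mul]
        have : x^2 - 1 = 0 := by
          rw [← hmul]
          field_simp
        linear_combination this
    rw [harg, hinv x hx0] at heq
    have hrhs : (f x + (f x)⁻¹)/(f x - (f x)⁻¹) = ((f x)^2+1)/((f x)^2-1) := by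
      rw [div_eq_div_iff _ hfx2]
      · field_simp
      · intro hc
        apply hfx2
        have hmul : (f x - (f x)⁻¹) * f x = 0 := by rw [hc, zero_mul]
        have : (f x)^2 - 1 = 0 := by
          rw [← hmul]
          field_simp
        linear_combination this
    rw [hrhs] at heq
    obtain ⟨hne2, heq2⟩ := hf (show x^2 ≠ (1:F) from hx2)
    have harg2 : (x^2 + 1)/(x^2 - 1) = (x^2+1)/(x^2-1) := rfl
    rw [hf1] at heq2
    -- heq : f ((x^2+1)/(x^2-1)) = ((f x)^2+1)/((f x)^2-1)
    -- heq2 : f ((x^2+1)/(x^2-1)) = (f (x^2) + 1)/(f (x^2) - 1)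
    have hA1 : f (x^2) - 1 ≠ 0 := by
      rw [← hf1]
      exact sub_ne_zero.mpr hne2
    have hkey : ((f x)^2+1)/((f x)^2-1) = (f (x^2) + 1)/(f (x^2) - 1) := by
      rw [← heq, heq2]
    rw [div_eq_div_iff hfx2 hA1] at hkey
    linear_combination (1/2 : F) * hkey
  -- f 2 = 2
  have htwo : f 2 = 2 := by
    have ha1 : f 2 ≠ 1 := fun hc => (by norm_num : (2:F) ≠ 1) (hinj (hc.trans hf1.symm))
    have ha0 : f 2 ≠ 0 := fun hc => (by norm_num : (2:F) ≠ 0) (hinj (hc.trans hf0.symm))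
    have ham1 : f 2 ≠ -1 := fun hc => (by norm_num : (2:F) ≠ -1) (hinj (hc.trans hm1.symm))
    have hf4 : f 4 = (f 2)^2 := by
      rw [show (4:F) = 2^2 by norm_num, hsq 2]
    have hs : (f 2)^2 + 1 ≠ 0 := by
      intro hc
      have h4 : f 4 = f (-1) := by rw [hf4, hm1]; linear_combination hc
      have := hinj h4
      norm_num at this
    -- relation for f 3
    have h3 : f 3 * (f 2 - 1) = f 2 + 1 := by
      obtain ⟨hne, heq⟩ := hf (show (2:F) ≠ 1 by norm_num)
      rw [show ((2:F) + 1)/((2:F) - 1) = 3 by norm_num, hf1] at heq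
      rw [eq_div_iff (sub_ne_zero.mpr (hf1 ▸ hne))] at heq
      exact heq
    -- relation for f 5
    have hne32 : f 3 ≠ f 2 := (hf (show (3:F) ≠ 2 by norm_num)).1
    have h5 : f 5 * (f 3 - f 2) = f 3 + f 2 := by
      obtain ⟨hne, heq⟩ := hf (show (3:F) ≠ 2 by norm_num)
      rw [show ((3:F) + 2)/((3:F) - 2) = 5 by norm_num] at heq
      rw [eq_div_iff (sub_ne_zero.mpr hne)] at heq
      exact heq
    -- relation from (5,4)
    have h94 : (f 3)^2 * (f 5 - (f 2)^2) = f 5 + (f 2)^2 := by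
      obtain ⟨hne, heq⟩ := hf (show (5:F) ≠ 4 by norm_num)
      rw [show ((5:F) + 4)/((5:F) - 4) = 9 by norm_num] at heq
      rw [eq_div_iff (sub_ne_zero.mpr hne)] at heq
      rw [show (9:F) = 3^2 by norm_num, hsq 3, hf4] at heq
      exact heq
    -- eliminate f 5
    have hG : (f 3)^3 + f 2*(f 3)^2 - (f 2)^2*(f 3)^3 + (f 2)^3*(f 3)^2
        - f 3 - f 2 - (f 2)^2*(f 3) + (f 2)^3 = 0 := by
      linear_combination (f 3 - f 2) * h94 - ((f 3)^2 - 1) * h5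
    have hfin : 2 * (f 2) * ((f 2)^2 + 1) * (f 2 - 2) * ((f 2 - 1) * (f 2 + 1)) = 0 := by
      linear_combination ((f 2 - 1)^3) * hG
        - (-(f 2 - 1)^3*(f 2 + 1)*(f 3)^2
           + (f 2 - 1)^2*((f 2)^3-(f 2)^2-(f 2)-1)*(f 3)
           + (f 2 - 1)*((f 2)^4-(f 2)^3-(f 2)^2-3*(f 2)))*h3
    rcases mul_eq_zero.1 hfin with h | h
    · rcases mul_eq_zero.1 h with h | h
      · rcases mul_eq_zero.1 h with h | h
        · rcases mul_eq_zero.1 h with h | h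
          · norm_num at h
          · exact absurd h ha0
        · exact absurd h hs
      · linear_combination h
    · rcases mul_eq_zero.1 h with h | h
      · exact absurd (by linear_combination h) ha1
      · exact absurd (by linear_combination h) ham1
  -- f 3 = 3
  have hthree : f 3 = 3 := by
    obtain ⟨hne, heq⟩ := hf (show (2:F) ≠ 1 by norm_num)
    rw [show ((2:F) + 1)/((2:F) - 1) = 3 by norm_num, hf1, htwo] at heq
    rw [heq]
    norm_num
  -- doubling
  have hdbl : ∀ x : F, f (2*x) = 2 * f x := by
    intro x
    rcases eq_or_ne x 0 with h | hx0
    · simp [h, hf0]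
    have hxy : x ≠ 2*x := by
      intro hc
      exact hx0 (by linear_combination -hc)
    obtain ⟨hne, heq⟩ := hf hxy
    have harg : (x + 2*x)/(x - 2*x) = -3 := by
      rw [show x + 2*x = 3*x by ring, show x - 2*x = -x by ring]
      rw [div_eq_iff (neg_ne_zero.mpr hx0)]
      ring
    rw [harg, hodd, hthree] at heq
    rw [eq_div_iff (sub_ne_zero.mpr hne)] at heq
    linear_combination (1/2 : F) * heq
  -- naturals
  have hnat : ∀ n : ℕ, f n = n := by
    intro n
    induction n using Nat.strong_induction_on with
    | _ n ih =>
      rcases Nat.lt_or_ge n 4 with h | h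
      · interval_cases n
        · exact_mod_cast hf0
        · exact_mod_cast hf1
        · exact_mod_cast htwo
        · exact_mod_cast hthree
      · rcases Nat.even_or_odd n with ⟨m, rfl⟩ | ⟨m, rfl⟩
        · have hm : m < m + m := by omega
          have : ((m + m : ℕ) : F) = 2 * (m : F) := by push_cast; ring
          rw [this, hdbl, ih m hm]
        · have hm1 : m < 2*m+1 := by omega
          have hm2 : m + 1 < 2*m+1 := by omega
          have hne' : ((m:F) + 1) ≠ (m : F) := by
            intro hc
            have : (1:F) = 0 := by linear_combination hc
            norm_num at this
          obtain ⟨hne, heq⟩ := hf hne'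
          have ihm : f (m : F) = (m : F) := ih m hm1
          have ihm1 : f ((m:F) + 1) = (m:F) + 1 := by
            have := ih (m+1) hm2
            push_cast at this
            exact this
          rw [ihm, ihm1] at heq
          have harg : ((m:F) + 1 + (m:F)) / ((m:F) + 1 - (m:F)) = ((2*m+1 : ℕ) : F) := by
            push_cast
            rw [show (m:F) + 1 - (m:F) = 1 by ring, div_one]
            ring
          rw [harg] at heq
          exact heq
  -- integers
  have hint : ∀ n : ℤ, f n = n := by
    intro n
    obtain ⟨m, rfl | rfl⟩ := n.eq_nat_or_neg
    · exact_mod_cast hnat m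
    · push_cast
      rw [hodd, hnat]
  -- rationals
  intro q
  rcases eq_or_ne q 1 with rfl | hq1
  · simpa using hf1
  rcases eq_or_ne q (-1) with rfl | hqm1
  · simpa using hm1
  have hd0 : (q.den : ℤ) ≠ 0 := by exact_mod_cast q.den_ne_zero
  have hpd1 : q.num - (q.den : ℤ) ≠ 0 := by
    intro hc
    apply hq1
    have h' : (q.num : ℚ) = ((q.den : ℤ) : ℚ) := by exact_mod_cast sub_eq_zero.mp hc
    rw [← Rat.num_div_den q]
    push_cast at h' ⊢
    rw [h', div_self (by exact_mod_cast hd0)]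
  have hpd2 : q.num + (q.den : ℤ) ≠ 0 := by
    intro hc
    apply hqm1
    have h' : (q.num : ℚ) = -((q.den : ℤ) : ℚ) := by
      exact_mod_cast eq_neg_of_add_eq_zero_left hc
    rw [← Rat.num_div_den q]
    push_cast at h' ⊢
    rw [h', neg_div, div_self (by exact_mod_cast hd0)]
  set u : F := ((q.num - (q.den : ℤ) : ℤ) : F) with hudef
  set v : F := ((q.num + (q.den : ℤ) : ℤ) : F) with hvdef
  have hu : u ≠ 0 := by rw [hudef]; exact_mod_cast hpd1
  have hv : v ≠ 0 := by rw [hvdef]; exact_mod_cast hpd2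
  have huv : u ≠ v := by
    intro hc
    rw [hudef, hvdef] at hc
    have h' : (q.num - (q.den:ℤ) : ℤ) = (q.num + (q.den:ℤ)) := by exact_mod_cast hc
    omega
  have hfu : f u⁻¹ = u⁻¹ := by rw [hinv u hu, hudef, hint]
  have hfv : f v⁻¹ = v⁻¹ := by rw [hinv v hv, hvdef, hint]
  have hxy : u⁻¹ ≠ v⁻¹ := fun hc => huv (inv_injective hc)
  obtain ⟨hne, heq⟩ := hf hxy
  rw [hfu, hfv] at heq
  have hsubne : u⁻¹ - v⁻¹ ≠ 0 := sub_ne_zero.mpr hxy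
  have hdenF : ((q.den : ℕ) : F) ≠ 0 := by exact_mod_cast q.den_ne_zero
  have harg : (u⁻¹ + v⁻¹) / (u⁻¹ - v⁻¹) = (q : F) := by
    rw [Rat.cast_def, div_eq_div_iff hsubne hdenF]
    field_simp
    rw [hudef, hvdef]
    push_cast
    ring
  rw [harg] at heq
  exact heq
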